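/- Suppose that G is a group that is not finitely generated, H is a subgroup of G, and G is finitely generated over H, i.e., there exists a finite subset S of G such that G is generated by H ∪ S. Then c(H) ≤ c(G): for every cardinal λ, if G can be written as the union of an increasing chain, indexed by the ordinals below λ, of proper subgroups, then H can also be written as the union of an increasing chain, indexed by the ordinals below λ, of proper subgroups. -/
import Mathlib


/-- If `G` is not finitely generated, `H ≤ G` and `G` is finitely generated over `H`,
then `c(H) ≤ c(G)`: any covering chain of proper subgroups of `G` indexed by the
ordinals below `λ` yields one for `H`. -/
theorem stmt_5 {G : Type*} [Group G] (H : Subgroup G) (hG : ¬ Group.FG G)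
    (hfg : ∃ S : Finset G, Subgroup.closure ((H : Set G) ∪ (S : Set G)) = ⊤)
    (lam : Cardinal)
    (h : ∃ K : Set.Iio lam.ord → Subgroup G,
        Monotone K ∧ (∀ i, K i ≠ ⊤) ∧ ∀ g : G, ∃ i, g ∈ K i) :
    ∃ L : Set.Iio lam.ord → Subgroup ↥H,
        Monotone L ∧ (∀ i, L i ≠ ⊤) ∧ ∀ x : ↥H, ∃ i, x ∈ L i := by
  obtain ⟨S, hS⟩ := hfg
  obtain ⟨K, hmono, hproper, hcov⟩ := h
  choose f hf using hcov
  -- an index above all indices of elements of S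
  set T : Finset (Set.Iio lam.ord) := insert (f 1) (S.image f) with hT
  have hTne : T.Nonempty := ⟨f 1, Finset.mem_insert_self _ _⟩
  set j0 := T.max' hTne with hj0def
  have hSj0 : ∀ s ∈ S, s ∈ K j0 := by
    intro s hs
    have : f s ≤ j0 := T.le_max' _ (Finset.mem_insert_of_mem (Finset.mem_image_of_mem f hs))
    exact hmono this (hf s)
  refine ⟨fun i => (K (max i j0)).comap H.subtype, ?_, ?_, ?_⟩
  · intro a b hab
    exact Subgroup.comap_mono (hmono (max_le_max hab le_rfl))
  · intro i hi
    apply hproper (max i j0)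
    rw [eq_top_iff, ← hS]
    apply (Subgroup.closure_le _).2
    rintro g (hg | hg)
    · have : (⟨g, hg⟩ : H) ∈ (K (max i j0)).comap H.subtype := by
        simp only at hi; rw [hi]; exact Subgroup.mem_top _
      exact this
    · exact hmono (le_max_right i j0) (hSj0 g hg)
  · intro x
    refine ⟨f x.1, ?_⟩
    exact hmono (le_max_left _ _) (hf x.1)
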